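/- Fix m ≥ 1 and a tuple (A_1, …, A_m) ∈ {x, x+1}^m with Fibonacci polynomials (F_k). Let (B_1, …, B_m) be the reversed tuple, B_k := A_{m+1−k}, with Fibonacci polynomials (G_k). Then G_{m−1}·F_{m−1} ≡ 1 (mod F_m); that is, the two numerator polynomials F_{m−1} and G_{m−1} associated with a given denominator F_m are multiplicative inverses of each other modulo F_m. -/
import Mathlib


open Polynomial

/-- The Fibonacci polynomials over `𝔽₂` associated to a sequence of partial
quotients `A`: `F 0 = 1`, `F 1 = A 1`, `F (k+2) = A (k+2) * F (k+1) + F k`. -/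
noncomputable def fibPoly (A : ℕ → Polynomial (ZMod 2)) : ℕ → Polynomial (ZMod 2)
  | 0 => 1
  | 1 => A 1
  | (k + 2) => A (k + 2) * fibPoly A (k + 1) + fibPoly A k

lemma two_eq_zero' : (2 : Polynomial (ZMod 2)) = 0 := by
  simpa using CharP.cast_eq_zero (Polynomial (ZMod 2)) 2

lemma fibPoly_step (A : ℕ → Polynomial (ZMod 2)) (k : ℕ) :
    fibPoly A (k + 2) = A (k + 2) * fibPoly A (k + 1) + fibPoly A k := by
  rw [fibPoly]

/-- Left recurrence for continuants. -/
lemma fibPoly_left (n : ℕ) : ∀ C : ℕ → Polynomial (ZMod 2),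
    fibPoly C (n + 2) =
      C 1 * fibPoly (fun k => C (k + 1)) (n + 1) + fibPoly (fun k => C (k + 2)) n := by
  induction n using Nat.strong_induction_on with
  | _ n ih =>
    intro C
    match n with
    | 0 => simp [fibPoly]; ring
    | 1 => simp [fibPoly]; ring
    | (n + 2) =>
      show fibPoly C (n + 4)
          = C 1 * fibPoly (fun k => C (k + 1)) (n + 3) + fibPoly (fun k => C (k + 2)) (n + 2)
      have h1 : fibPoly C (n + 3)
          = C 1 * fibPoly (fun k => C (k + 1)) (n + 2) + fibPoly (fun k => C (k + 2)) (n + 1) :=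
        ih (n + 1) (by omega) C
      have h2 : fibPoly C (n + 2)
          = C 1 * fibPoly (fun k => C (k + 1)) (n + 1) + fibPoly (fun k => C (k + 2)) n :=
        ih n (by omega) C
      have e0 : fibPoly C (n + 4) = C (n + 4) * fibPoly C (n + 3) + fibPoly C (n + 2) :=
        fibPoly_step C (n + 2)
      have eS : fibPoly (fun k => C (k + 1)) (n + 3)
          = C (n + 4) * fibPoly (fun k => C (k + 1)) (n + 2)
            + fibPoly (fun k => C (k + 1)) (n + 1) :=
        fibPoly_step (fun k => C (k + 1)) (n + 1)
      have eT : fibPoly (fun k => C (k + 2)) (n + 2)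
          = C (n + 4) * fibPoly (fun k => C (k + 2)) (n + 1)
            + fibPoly (fun k => C (k + 2)) n :=
        fibPoly_step (fun k => C (k + 2)) n
      linear_combination e0 + C (n + 4) * h1 + h2 - C 1 * eS - eT

/-- Reversal symmetry of continuants. -/
lemma fibPoly_rev (n : ℕ) : ∀ C D : ℕ → Polynomial (ZMod 2),
    (∀ k, 1 ≤ k → k ≤ n → D k = C (n + 1 - k)) → fibPoly D n = fibPoly C n := by
  induction n using Nat.strong_induction_on with
  | _ n ih =>
    intro C D hD
    match n with
    | 0 => rfl
    | 1 => simp [fibPoly, hD 1 le_rfl le_rfl]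
    | (n + 2) =>
      have e1 : fibPoly D (n + 1) = fibPoly (fun k => C (k + 1)) (n + 1) := by
        apply ih (n + 1) (by omega)
        intro k hk1 hk2
        rw [hD k hk1 (by omega)]
        congr 1
        omega
      have e2 : fibPoly D n = fibPoly (fun k => C (k + 2)) n := by
        apply ih n (by omega)
        intro k hk1 hk2
        rw [hD k hk1 (by omega)]
        congr 1
        omega
      rw [fibPoly, e1, e2, hD (n + 2) (by omega) le_rfl,
        show n + 2 + 1 - (n + 2) = 1 from by omega, fibPoly_left]

/-- Determinant identity (characteristic 2). -/
lemma fibPoly_det (n : ℕ) (A : ℕ → Polynomial (ZMod 2)) :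
    fibPoly A (n + 2) * fibPoly (fun k => A (k + 1)) n
      + fibPoly A (n + 1) * fibPoly (fun k => A (k + 1)) (n + 1) = 1 := by
  induction n with
  | zero =>
    simp [fibPoly]
    linear_combination (A 1 * A 2) * two_eq_zero'
  | succ n ih =>
    have hE : fibPoly (fun k => A (k + 1)) (n + 2)
        = (fun k => A (k + 1)) (n + 2) * fibPoly (fun k => A (k + 1)) (n + 1)
          + fibPoly (fun k => A (k + 1)) n := rfl
    rw [show n + 1 + 2 = (n + 1) + 2 from rfl, fibPoly, hE]
    simp only
    linear_combination ih +
      (A (n + 3) * fibPoly A (n + 2) * fibPoly (fun k => A (k + 1)) (n + 1)) * two_eq_zero'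

/-- If `B` is the reversal of the tuple `A`, with Fibonacci polynomials `G`,
then `G (m-1) * F (m-1) ≡ 1 (mod F m)`: the two numerator polynomials attached
to a given denominator `F m` are multiplicative inverses modulo `F m`. -/
theorem fibPoly_reverse_inverse_mod (m : ℕ) (hm : 1 ≤ m)
    (A B : ℕ → Polynomial (ZMod 2))
    (hA : ∀ k, 1 ≤ k → k ≤ m → A k = X ∨ A k = X + 1)
    (hB : ∀ k, 1 ≤ k → k ≤ m → B k = A (m + 1 - k)) :
    fibPoly A m ∣ fibPoly B (m - 1) * fibPoly A (m - 1) - 1 := by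
  match m, hm with
  | 1, _ => simp [fibPoly]
  | (n + 2), _ =>
    have hrev : fibPoly B (n + 1) = fibPoly (fun k => A (k + 1)) (n + 1) := by
      apply fibPoly_rev
      intro k hk1 hk2
      rw [hB k hk1 (by omega)]
      congr 1
      omega
    have hdet := fibPoly_det n A
    refine ⟨fibPoly (fun k => A (k + 1)) n, ?_⟩
    simp only [show n + 2 - 1 = n + 1 from rfl, hrev]
    linear_combination hdet - (fibPoly A (n + 2) * fibPoly (fun k => A (k + 1)) n) * two_eq_zero'
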